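/- With notation as above, M̂(μ, ν, t) = 1 for some t > 0 if and only if μ = ν. -/

import Mathlib

open Set MeasureTheory Filter Topology

noncomputable section

/-- The Łukasiewicz t-norm. -/
def luk (a b : ℝ) : ℝ := max (a + b - 1) 0

/-- A continuous t-norm on `[0,1]`. -/
structure IsContinuousTNorm (star : ℝ → ℝ → ℝ) : Prop where
  maps_to : ∀ a b, a ∈ Icc (0:ℝ) 1 → b ∈ Icc (0:ℝ) 1 → star a b ∈ Icc (0:ℝ) 1
  comm : ∀ a b, a ∈ Icc (0:ℝ) 1 → b ∈ Icc (0:ℝ) 1 → star a b = star b a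
  assoc : ∀ a b c, a ∈ Icc (0:ℝ) 1 → b ∈ Icc (0:ℝ) 1 → c ∈ Icc (0:ℝ) 1 →
    star (star a b) c = star a (star b c)
  continuous : ContinuousOn (fun p : ℝ × ℝ => star p.1 p.2) (Icc 0 1 ×ˢ Icc 0 1)
  one_right : ∀ a, a ∈ Icc (0:ℝ) 1 → star a 1 = a
  mono : ∀ a b c d, a ∈ Icc (0:ℝ) 1 → b ∈ Icc (0:ℝ) 1 → c ∈ Icc (0:ℝ) 1 →
    d ∈ Icc (0:ℝ) 1 → a ≤ c → b ≤ d → star a b ≤ star c d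

/-- A fuzzy metric (George–Veeramani) with respect to a t-norm `star`. -/
structure IsFuzzyMetric {X : Type*} (M : X → X → ℝ → ℝ) (star : ℝ → ℝ → ℝ) : Prop where
  pos : ∀ x y t, 0 < t → 0 < M x y t
  le_one : ∀ x y t, 0 < t → M x y t ≤ 1
  eq_one_iff : ∀ x y t, 0 < t → (M x y t = 1 ↔ x = y)
  symm : ∀ x y t, 0 < t → M x y t = M y x t
  triangle : ∀ x y z t s, 0 < t → 0 < s → star (M x y t) (M y z s) ≤ M x z (t + s)
  continuousOn : ∀ x y, ContinuousOn (fun t => M x y t) (Ioi (0:ℝ))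

/-- The open ball `B(x,r,t)` in a fuzzy metric space. -/
def fmBall {X : Type*} (M : X → X → ℝ → ℝ) (x : X) (r t : ℝ) : Set X :=
  {y | 1 - r < M x y t}

/-- The `r,t`-expansion `A^{r,t}` of a set `A`. -/
def fmExpand {X : Type*} (M : X → X → ℝ → ℝ) (A : Set X) (r t : ℝ) : Set X :=
  ⋃ x ∈ A, fmBall M x r t

/-- The fuzzy metric `M` generates the given topology on `X`. -/
def GeneratesTopology {X : Type*} [TopologicalSpace X] (M : X → X → ℝ → ℝ) : Prop :=
  TopologicalSpace.IsTopologicalBasis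
    {s : Set X | ∃ x r t, 0 < r ∧ r < 1 ∧ 0 < t ∧ s = fmBall M x r t}

/-- The set of admissible radii in the definition of the fuzzy Prokhorov metric. -/
def prokSet {X : Type*} [MeasurableSpace X] (M : X → X → ℝ → ℝ)
    (μ ν : Measure X) (t : ℝ) : Set ℝ :=
  {r | 0 < r ∧ r < 1 ∧ ∀ A : Set X, MeasurableSet A →
    μ A ≤ ν (fmExpand M A r t) + ENNReal.ofReal r ∧
    ν A ≤ μ (fmExpand M A r t) + ENNReal.ofReal r}

/-- The fuzzy Prokhorov function `M̂` on measures. -/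
def fuzzyProkhorov {X : Type*} [MeasurableSpace X] (M : X → X → ℝ → ℝ)
    (μ ν : Measure X) (t : ℝ) : ℝ :=
  1 - sInf (prokSet M μ ν t)

section Aux

variable {X : Type*} {M : X → X → ℝ → ℝ}

lemma luk_tri (hM : IsFuzzyMetric M luk) (x y z : X) {t s : ℝ} (ht : 0 < t) (hs : 0 < s) :
    M x y t + M y z s - 1 ≤ M x z (t + s) :=
  le_trans (le_max_left _ _) (hM.triangle x y z t s ht hs)

lemma M_self (hM : IsFuzzyMetric M luk) (x : X) {t : ℝ} (ht : 0 < t) : M x x t = 1 :=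
  (hM.eq_one_iff x x t ht).mpr rfl

lemma mem_fmBall_self (hM : IsFuzzyMetric M luk) (x : X) {r t : ℝ} (hr : 0 < r) (ht : 0 < t) :
    x ∈ fmBall M x r t := by
  simp only [fmBall, mem_setOf_eq, M_self hM x ht]; linarith

lemma subset_fmExpand (hM : IsFuzzyMetric M luk) (A : Set X) {r t : ℝ} (hr : 0 < r)
    (ht : 0 < t) : A ⊆ fmExpand M A r t := fun x hx =>
  mem_biUnion hx (mem_fmBall_self hM x hr ht)

lemma fmExpand_mono (A : Set X) {r r' : ℝ} (h : r ≤ r') (t : ℝ) :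
    fmExpand M A r t ⊆ fmExpand M A r' t := by
  refine iUnion₂_mono fun x _ => fun y hy => ?_
  have : 1 - r < M x y t := hy
  show 1 - r' < M x y t
  linarith

lemma exists_ball_subset (hM : IsFuzzyMetric M luk) {z y : X} {r s : ℝ}
    (hr : 0 < r) (hs : 0 < s) (hy : y ∈ fmBall M z r s) :
    ∃ δ s', 0 < δ ∧ δ ≤ r ∧ 0 < s' ∧ fmBall M y δ s' ⊆ fmBall M z r s := by
  have hy' : 1 - r < M z y s := hy
  have hc : ContinuousAt (fun u => M z y u) s :=
    (hM.continuousOn z y).continuousAt (Ioi_mem_nhds hs)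
  have hev : {u : ℝ | 1 - r < M z y u} ∈ 𝓝 s := hc (Ioi_mem_nhds hy')
  obtain ⟨ε, hε, hball⟩ := Metric.mem_nhds_iff.mp hev
  set s₀ : ℝ := s - min ε s / 2 with hs₀def
  have hmin : 0 < min ε s := lt_min hε hs
  have hs₀pos : 0 < s₀ := by
    have : min ε s ≤ s := min_le_right _ _
    simp only [hs₀def]; linarith
  have hs₀lt : s₀ < s := by simp only [hs₀def]; linarith
  have hs₀mem : s₀ ∈ Metric.ball s ε := by
    have h1 : min ε s ≤ ε := min_le_left _ _
    simp only [Metric.mem_ball, Real.dist_eq, hs₀def]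
    rw [abs_sub_comm, show s - (s - min ε s / 2) = min ε s / 2 by ring, abs_of_pos (by linarith)]
    linarith
  have hM₀ : 1 - r < M z y s₀ := hball hs₀mem
  refine ⟨M z y s₀ - (1 - r), s - s₀, by linarith, ?_, by linarith, ?_⟩
  · have := hM.le_one z y s₀ hs₀pos; linarith
  · intro w hw
    have hw' : 1 - (M z y s₀ - (1 - r)) < M y w (s - s₀) := hw
    have htri := luk_tri hM z y w hs₀pos (by linarith : (0:ℝ) < s - s₀)
    rw [show s₀ + (s - s₀) = s by ring] at htri
    show 1 - r < M z w s
    linarith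

lemma isOpen_fmBall [TopologicalSpace X] (hM : IsFuzzyMetric M luk)
    (hgen : GeneratesTopology M) (z : X) {r t : ℝ} (hr : 0 < r) (hr1 : r < 1) (ht : 0 < t) :
    IsOpen (fmBall M z r t) := by
  rw [TopologicalSpace.IsTopologicalBasis.isOpen_iff hgen]
  intro y hy
  obtain ⟨δ, s', hδ, hδr, hs', hsub⟩ := exists_ball_subset hM hr ht hy
  exact ⟨fmBall M y δ s', ⟨y, δ, s', hδ, hδr.trans_lt hr1, hs', rfl⟩,
    mem_fmBall_self hM y hδ hs', hsub⟩

lemma isOpen_fmExpand [TopologicalSpace X] (hM : IsFuzzyMetric M luk)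
    (hgen : GeneratesTopology M) (A : Set X) {r t : ℝ} (hr : 0 < r) (hr1 : r < 1) (ht : 0 < t) :
    IsOpen (fmExpand M A r t) :=
  isOpen_biUnion fun x _ => isOpen_fmBall hM hgen x hr hr1 ht

end Aux

section Aux2

variable {X : Type*} {M : X → X → ℝ → ℝ}

lemma exists_pointwise [TopologicalSpace X] [CompactSpace X] (hM : IsFuzzyMetric M luk)
    (hgen : GeneratesTopology M) (x : X) {t : ℝ} (ht : 0 < t) :
    ∃ c : ℝ, 0 < c ∧ c < 1 ∧ ∀ y, c < M x y t := by
  set U : ℕ → Set X := fun n => fmBall M x (1 - 1/((n:ℝ)+2)) t with hU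
  have hr : ∀ n : ℕ, 0 < 1 - 1/((n:ℝ)+2) ∧ 1 - 1/((n:ℝ)+2) < 1 := by
    intro n
    have h2 : (0:ℝ) < (n:ℝ)+2 := by positivity
    have h3 : 1/((n:ℝ)+2) ≤ 1/2 := by
      apply one_div_le_one_div_of_le <;> [norm_num; skip]
      have : (0:ℝ) ≤ (n:ℝ) := Nat.cast_nonneg n
      linarith
    have h4 : 0 < 1/((n:ℝ)+2) := by positivity
    constructor <;> linarith
  have hUopen : ∀ n, IsOpen (U n) := fun n => isOpen_fmBall hM hgen x (hr n).1 (hr n).2 ht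
  have hcover : univ ⊆ ⋃ n, U n := by
    intro y _
    have hpos := hM.pos x y t ht
    obtain ⟨n, hn⟩ := exists_nat_gt (1 / M x y t)
    refine mem_iUnion.mpr ⟨n, ?_⟩
    show 1 - (1 - 1/((n:ℝ)+2)) < M x y t
    have h2 : (0:ℝ) < (n:ℝ)+2 := by positivity
    have h1 : 1 / M x y t < (n:ℝ)+2 := by linarith
    have h3 : 1 < ((n:ℝ)+2) * M x y t := by
      have := (div_lt_iff₀ hpos).mp h1
      linarith
    have : 1/((n:ℝ)+2) < M x y t := (div_lt_iff₀ h2).mpr (by linarith [mul_comm ((n:ℝ)+2) (M x y t)])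
    linarith
  obtain ⟨s, hs⟩ := isCompact_univ.elim_finite_subcover U hUopen hcover
  set N := s.sup id with hN
  refine ⟨1/((N:ℝ)+2), by positivity, ?_, ?_⟩
  · have h2 : (2:ℝ) ≤ (N:ℝ)+2 := by
      have : (0:ℝ) ≤ (N:ℝ) := Nat.cast_nonneg N
      linarith
    have := one_div_le_one_div_of_le (by norm_num : (0:ℝ) < 2) h2
    linarith
  · intro y
    obtain ⟨i, hi, hyU⟩ := mem_iUnion₂.mp (hs (mem_univ y))
    have hiN : i ≤ N := Finset.le_sup (f := id) hi
    have hcast : (i:ℝ) + 2 ≤ (N:ℝ) + 2 := by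
      have : (i:ℝ) ≤ (N:ℝ) := Nat.cast_le.mpr hiN
      linarith
    have hmono : 1/((N:ℝ)+2) ≤ 1/((i:ℝ)+2) :=
      one_div_le_one_div_of_le (by positivity) hcast
    have hyU' : 1 - (1 - 1/((i:ℝ)+2)) < M x y t := hyU
    linarith

lemma exists_uniform [TopologicalSpace X] [CompactSpace X] (hM : IsFuzzyMetric M luk)
    (hgen : GeneratesTopology M) {t : ℝ} (ht : 0 < t) :
    ∃ m : ℝ, 0 < m ∧ m < 1 ∧ ∀ x y, m ≤ M x y t := by
  rcases isEmpty_or_nonempty X with hX | hX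
  · exact ⟨1/2, by norm_num, by norm_num, fun x => (hX.false x).elim⟩
  have ht2 : 0 < t/2 := by linarith
  choose c hc0 hc1 hc using fun x : X => exists_pointwise hM hgen x ht2
  set U : X → Set X := fun x => fmBall M x (c x / 2) (t/2) with hU
  have hUopen : ∀ x, IsOpen (U x) :=
    fun x => isOpen_fmBall hM hgen x (by linarith [hc0 x]) (by linarith [hc1 x]) ht2
  have hcover : univ ⊆ ⋃ x, U x := fun x _ =>
    mem_iUnion.mpr ⟨x, mem_fmBall_self hM x (by linarith [hc0 x]) ht2⟩
  obtain ⟨s, hs⟩ := isCompact_univ.elim_finite_subcover U hUopen hcover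
  have hsne : s.Nonempty := by
    obtain ⟨x⟩ := hX
    obtain ⟨i, hi, _⟩ := mem_iUnion₂.mp (hs (mem_univ x))
    exact ⟨i, hi⟩
  refine ⟨s.inf' hsne (fun i => c i / 2), ?_, ?_, ?_⟩
  · rw [Finset.lt_inf'_iff]
    intro i _
    linarith [hc0 i]
  · obtain ⟨j, hj⟩ := hsne
    have := Finset.inf'_le (fun i => c i / 2) hj
    have := hc1 j
    linarith
  · intro x y
    obtain ⟨i, hi, hxU⟩ := mem_iUnion₂.mp (hs (mem_univ x))
    have h1 : 1 - c i / 2 < M i x (t/2) := hxU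
    have h2 : c i < M i y (t/2) := hc i y
    have htri := luk_tri hM x i y ht2 ht2
    rw [show t/2 + t/2 = t by ring] at htri
    have hsymm : M x i (t/2) = M i x (t/2) := hM.symm x i (t/2) ht2
    have hinf := Finset.inf'_le (fun i => c i / 2) hi
    linarith

end Aux2

section Aux3

variable {X : Type*} {M : X → X → ℝ → ℝ}

lemma iInter_fmExpand [TopologicalSpace X] [CompactSpace X] (hM : IsFuzzyMetric M luk)
    (hgen : GeneratesTopology M) {A : Set X} (hA : IsClosed A) {t : ℝ} (ht : 0 < t) :
    ⋂ n : ℕ, fmExpand M A (1/((n:ℝ)+2)) t = A := by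
  apply Subset.antisymm
  · intro y hy
    have hsel : ∀ n : ℕ, ∃ x ∈ A, 1 - 1/((n:ℝ)+2) < M x y t := by
      intro n
      have h := mem_iInter.mp hy n
      obtain ⟨x, hx, hxy⟩ := mem_iUnion₂.mp h
      exact ⟨x, hx, hxy⟩
    choose u hu hMu using hsel
    have hmap : Filter.map u atTop ≤ 𝓟 A := by
      rw [Filter.le_principal_iff, Filter.mem_map]
      exact Filter.Eventually.of_forall hu
    obtain ⟨x, hxA, hcl⟩ := (hA.isCompact).exists_clusterPt hmap
    have key : ∀ ε : ℝ, 0 < ε → ε < 1 → ∀ N : ℕ, 1 - ε - 1/((N:ℝ)+2) ≤ M x y (t+t) := by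
      intro ε hε hε1 N
      have hball : fmBall M x ε t ∈ 𝓝 x :=
        (isOpen_fmBall hM hgen x hε hε1 ht).mem_nhds (mem_fmBall_self hM x hε ht)
      have himg : u '' Ici N ∈ Filter.map u atTop := image_mem_map (mem_atTop N)
      have hmem : fmBall M x ε t ∩ u '' Ici N ∈ 𝓝 x ⊓ Filter.map u atTop :=
        Filter.inter_mem (Filter.mem_inf_of_left hball) (Filter.mem_inf_of_right himg)
      obtain ⟨w, hw1, n, hnN, rfl⟩ := Filter.NeBot.nonempty_of_mem hcl hmem
      have h1 : 1 - ε < M x (u n) t := hw1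
      have h2 : 1 - 1/((n:ℝ)+2) < M (u n) y t := hMu n
      have htri := luk_tri hM x (u n) y ht ht
      have hcast : (N:ℝ) + 2 ≤ (n:ℝ) + 2 := by
        have : (N:ℝ) ≤ (n:ℝ) := Nat.cast_le.mpr hnN
        linarith
      have hmono : 1/((n:ℝ)+2) ≤ 1/((N:ℝ)+2) :=
        one_div_le_one_div_of_le (by positivity) hcast
      linarith
    have hone : M x y (t+t) = 1 := by
      have hle := hM.le_one x y (t+t) (by linarith)
      by_contra hne
      have hlt : M x y (t+t) < 1 := lt_of_le_of_ne hle hne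
      set η := 1 - M x y (t+t) with hη
      have hη0 : 0 < η := by linarith
      obtain ⟨N, hN⟩ := exists_nat_gt (3/η)
      have hNpos : (0:ℝ) < (N:ℝ) + 2 := by positivity
      have h1 : 1/((N:ℝ)+2) < η/3 := by
        rw [div_lt_div_iff₀ hNpos (by norm_num : (0:ℝ) < 3)]
        have := (div_lt_iff₀ hη0).mp (by linarith : 3/η < (N:ℝ)+2)
        linarith
      have hεpos : 0 < min (η/3) (1/2) := lt_min (by linarith) (by norm_num)
      have hεlt : min (η/3) (1/2) < 1 := lt_of_le_of_lt (min_le_right _ _) (by norm_num)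
      have hkey := key (min (η/3) (1/2)) hεpos hεlt N
      have hminle : min (η/3) (1/2) ≤ η/3 := min_le_left _ _
      linarith
    have hxy : x = y := (hM.eq_one_iff x y (t+t) (by linarith)).mp hone
    exact hxy ▸ hxA
  · intro a ha
    exact mem_iInter.mpr fun n => subset_fmExpand hM A (by positivity) ht ha

lemma measure_le_of_small [TopologicalSpace X] [CompactSpace X] [MeasurableSpace X]
    [BorelSpace X] (hM : IsFuzzyMetric M luk) (hgen : GeneratesTopology M)
    (μ ν : Measure X) [IsFiniteMeasure ν] {t : ℝ} (ht : 0 < t)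
    (h : ∀ ε : ℝ, 0 < ε → ∃ r, 0 < r ∧ r < ε ∧
        ∀ A : Set X, MeasurableSet A → μ A ≤ ν (fmExpand M A r t) + ENNReal.ofReal r)
    {A : Set X} (hA : IsClosed A) : μ A ≤ ν A := by
  set C : ℕ → Set X := fun n => fmExpand M A (1/((n:ℝ)+2)) t with hC
  have hrn : ∀ n : ℕ, 0 < 1/((n:ℝ)+2) ∧ 1/((n:ℝ)+2) < 1 := by
    intro n
    have h0 : (0:ℝ) ≤ (n:ℝ) := Nat.cast_nonneg n
    have h2 : (2:ℝ) ≤ (n:ℝ)+2 := by linarith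
    have := one_div_le_one_div_of_le (by norm_num : (0:ℝ) < 2) h2
    exact ⟨by positivity, by linarith⟩
  have hCopen : ∀ n, IsOpen (C n) := fun n =>
    isOpen_fmExpand hM hgen A (hrn n).1 (hrn n).2 ht
  have hanti : Antitone C := by
    intro a b hab
    apply fmExpand_mono
    have hcast : (a:ℝ) + 2 ≤ (b:ℝ) + 2 := by
      have : (a:ℝ) ≤ (b:ℝ) := Nat.cast_le.mpr hab
      linarith
    exact one_div_le_one_div_of_le (by positivity) hcast
  have hle : ∀ n : ℕ, μ A ≤ ν (C n) + ENNReal.ofReal (1/((n:ℝ)+2)) := by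
    intro n
    obtain ⟨r, hr0, hrε, hr⟩ := h (1/((n:ℝ)+2)) (hrn n).1
    refine (hr A hA.measurableSet).trans (add_le_add ?_ ?_)
    · exact measure_mono (fmExpand_mono A hrε.le t)
    · exact ENNReal.ofReal_le_ofReal hrε.le
  have h1 : Tendsto (fun n => ν (C n)) atTop (𝓝 (ν A)) := by
    have htend := tendsto_measure_iInter_atTop (μ := ν)
      (fun n => (hCopen n).measurableSet.nullMeasurableSet) hanti ⟨0, measure_ne_top ν _⟩
    rwa [show ⋂ n, C n = A from iInter_fmExpand hM hgen hA ht] at htend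
  have h2 : Tendsto (fun n : ℕ => ENNReal.ofReal (1/((n:ℝ)+2))) atTop (𝓝 0) := by
    rw [← ENNReal.ofReal_zero]
    apply ENNReal.tendsto_ofReal
    have : Tendsto (fun n : ℕ => (n:ℝ)+2) atTop atTop :=
      tendsto_atTop_add_const_right atTop 2 tendsto_natCast_atTop_atTop
    simpa [one_div, Pi.inv_def] using this.inv_tendsto_atTop
  have hlim : Tendsto (fun n => ν (C n) + ENNReal.ofReal (1/((n:ℝ)+2))) atTop (𝓝 (ν A)) := by
    simpa using h1.add h2
  exact ge_of_tendsto' hlim hle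

end Aux3

section Aux4

variable {X : Type*} {M : X → X → ℝ → ℝ}

lemma prokSet_nonempty [TopologicalSpace X] [CompactSpace X] [MeasurableSpace X]
    (hM : IsFuzzyMetric M luk) (hgen : GeneratesTopology M)
    (μ ν : Measure X) [IsProbabilityMeasure μ] [IsProbabilityMeasure ν]
    {t : ℝ} (ht : 0 < t) : (prokSet M μ ν t).Nonempty := by
  obtain ⟨m, hm0, hm1, hm⟩ := exists_uniform hM hgen ht
  have key : ∀ (κ ρ : Measure X), IsProbabilityMeasure κ → IsProbabilityMeasure ρ →
      ∀ A : Set X, κ A ≤ ρ (fmExpand M A (1 - m/2) t) + ENNReal.ofReal (1 - m/2) := by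
    intro κ ρ hκ hρ A
    rcases A.eq_empty_or_nonempty with rfl | ⟨a, ha⟩
    · simp [fmExpand]
    · have huniv : fmExpand M A (1 - m/2) t = univ := by
        apply eq_univ_of_univ_subset
        intro y _
        refine mem_biUnion ha ?_
        show 1 - (1 - m/2) < M a y t
        have := hm a y; linarith
      rw [huniv]
      calc κ A ≤ κ univ := measure_mono (subset_univ A)
        _ = 1 := hκ.measure_univ
        _ = ρ univ := hρ.measure_univ.symm
        _ ≤ _ := le_self_add
  exact ⟨1 - m/2, by linarith, by linarith,
    fun A _ => ⟨key μ ν inferInstance inferInstance A, key ν μ inferInstance inferInstance A⟩⟩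

end Aux4


/-- `M̂(μ,ν,t) = 1` for some `t > 0` iff `μ = ν`. -/
theorem fuzzyProkhorov_eq_one_iff {X : Type*} [TopologicalSpace X] [CompactSpace X]
    [MeasurableSpace X] [BorelSpace X]
    (M : X → X → ℝ → ℝ) (hM : IsFuzzyMetric M luk) (hgen : GeneratesTopology M)
    (μ ν : ProbabilityMeasure X) :
    (∃ t : ℝ, 0 < t ∧ fuzzyProkhorov M (μ : Measure X) (ν : Measure X) t = 1) ↔ μ = ν := by
  constructor
  · rintro ⟨t, ht, hProk⟩
    have hne : (prokSet M (μ : Measure X) (ν : Measure X) t).Nonempty :=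
      prokSet_nonempty hM hgen _ _ ht
    have hinf0 : sInf (prokSet M (μ : Measure X) (ν : Measure X) t) = 0 := by
      unfold fuzzyProkhorov at hProk; linarith
    have hex : ∀ ε : ℝ, 0 < ε →
        ∃ r ∈ prokSet M (μ : Measure X) (ν : Measure X) t, r < ε := by
      intro ε hε
      exact exists_lt_of_csInf_lt hne (by rw [hinf0]; exact hε)
    have h1 : ∀ A : Set X, IsClosed A → (μ : Measure X) A ≤ (ν : Measure X) A := by
      intro A hA
      refine measure_le_of_small hM hgen _ _ ht (fun ε hε => ?_) hA
      obtain ⟨r, hr, hrε⟩ := hex ε hε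
      exact ⟨r, hr.1, hrε, fun B hB => (hr.2.2 B hB).1⟩
    have h2 : ∀ A : Set X, IsClosed A → (ν : Measure X) A ≤ (μ : Measure X) A := by
      intro A hA
      refine measure_le_of_small hM hgen _ _ ht (fun ε hε => ?_) hA
      obtain ⟨r, hr, hrε⟩ := hex ε hε
      exact ⟨r, hr.1, hrε, fun B hB => (hr.2.2 B hB).2⟩
    apply ProbabilityMeasure.toMeasure_injective
    apply ext_of_generate_finite _ ?_ isPiSystem_isClosed ?_ (by simp)
    · rw [BorelSpace.measurable_eq (α := X), borel_eq_generateFrom_isClosed]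
    · intro A hA
      exact le_antisymm (h1 A hA) (h2 A hA)
  · rintro rfl
    refine ⟨1, one_pos, ?_⟩
    have hsub : ∀ r : ℝ, 0 < r → r < 1 →
        r ∈ prokSet M (μ : Measure X) (μ : Measure X) 1 := by
      intro r h0 h1
      refine ⟨h0, h1, fun A _ => ⟨?_, ?_⟩⟩ <;>
        exact le_trans (measure_mono (subset_fmExpand hM A h0 one_pos)) le_self_add
    have h0 : 0 ≤ sInf (prokSet M (μ : Measure X) (μ : Measure X) 1) :=
      Real.sInf_nonneg (fun x hx => hx.1.le)
    have hle : ∀ ε : ℝ, 0 < ε → ε < 1 →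
        sInf (prokSet M (μ : Measure X) (μ : Measure X) 1) ≤ ε :=
      fun ε hε hε1 => csInf_le ⟨0, fun x hx => hx.1.le⟩ (hsub ε hε hε1)
    have hI : sInf (prokSet M (μ : Measure X) (μ : Measure X) 1) = 0 := by
      by_contra hne
      set I := sInf (prokSet M (μ : Measure X) (μ : Measure X) 1) with hIdef
      have hpos : 0 < I := lt_of_le_of_ne h0 (Ne.symm hne)
      have hm1 : min I 1 ≤ I := min_le_left _ _
      have hm2 : min I 1 ≤ 1 := min_le_right _ _
      have hm0 : 0 < min I 1 := lt_min hpos one_pos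
      have := hle (min I 1 / 2) (by linarith) (by linarith)
      linarith
    unfold fuzzyProkhorov
    rw [hI]; ring
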